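/- Let r ≥ 2 and a_1, …, a_r be integers ≥ 2. In the ℂ-algebra R := ℂ[x_1, …, x_r]/(x_i x_j for i ≠ j; a_i x_i^{a_i} − a_j x_j^{a_j} for i ≠ j), the family consisting of 1, the elements x_i^j for 1 ≤ i ≤ r and 1 ≤ j ≤ a_i − 1, and the element a_1 x_1^{a_1}, is a ℂ-vector space basis of R. -/

import Mathlib

open MvPolynomial

/-- The defining ideal of the degenerate quantum cohomology ring of `ℙ¹_{A}`. -/
noncomputable def relIdeal (r : ℕ) (a : Fin r → ℕ) : Ideal (MvPolynomial (Fin r) ℂ) :=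
  Ideal.span ({p | ∃ i j : Fin r, i ≠ j ∧ p = X i * X j} ∪
    {p | ∃ i j : Fin r, i ≠ j ∧
      p = C (a i : ℂ) * X i ^ (a i) - C (a j : ℂ) * X j ^ (a j)})

/-- The family `1`, `x_i^j` (`1 ≤ j ≤ a_i - 1`), `a_1 x_1^{a_1}` in the quotient ring. -/
noncomputable def basisFam (r : ℕ) (hr : 2 ≤ r) (a : Fin r → ℕ) :
    (Unit ⊕ ((Σ i : Fin r, Fin (a i - 1)) ⊕ Unit)) →
      (MvPolynomial (Fin r) ℂ ⧸ relIdeal r a)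
  | Sum.inl _ => 1
  | Sum.inr (Sum.inl ⟨i, j⟩) => Ideal.Quotient.mk (relIdeal r a) (X i ^ (j.val + 1))
  | Sum.inr (Sum.inr _) =>
      Ideal.Quotient.mk (relIdeal r a)
        (C (a ⟨0, by omega⟩ : ℂ) * X (⟨0, by omega⟩ : Fin r) ^ (a ⟨0, by omega⟩))

namespace BasisFamAux

variable (r : ℕ) (a : Fin r → ℕ)

abbrev Idx (r : ℕ) (a : Fin r → ℕ) := Unit ⊕ ((Σ i : Fin r, Fin (a i - 1)) ⊕ Unit)

noncomputable def comp : Idx r a → (MvPolynomial (Fin r) ℂ →ₗ[ℂ] ℂ)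
  | Sum.inl _ => lcoeff ℂ 0
  | Sum.inr (Sum.inl ⟨i, j⟩) => lcoeff ℂ (Finsupp.single i (j.val + 1))
  | Sum.inr (Sum.inr _) => ∑ i : Fin r, (a i : ℂ)⁻¹ • lcoeff ℂ (Finsupp.single i (a i))

noncomputable def ellMap : MvPolynomial (Fin r) ℂ →ₗ[ℂ] (Idx r a → ℂ) :=
  LinearMap.pi (comp r a)

lemma twovar_ne_single (i j k : Fin r) (hij : i ≠ j) (m : Fin r →₀ ℕ) (n : ℕ) :
    m + Finsupp.single i 1 + Finsupp.single j 1 ≠ Finsupp.single k n := by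
  intro h
  rcases eq_or_ne k i with rfl | hk
  · have := DFunLike.congr_fun h j
    simp only [Finsupp.add_apply, Finsupp.single_apply, hij, if_true, if_false] at this
    omega
  · have := DFunLike.congr_fun h i
    simp only [Finsupp.add_apply, Finsupp.single_apply, Ne.symm hij, hk, if_true,
      if_false] at this
    omega

lemma twovar_ne_zero (i j : Fin r) (hij : i ≠ j) (m : Fin r →₀ ℕ) :
    m + Finsupp.single i 1 + Finsupp.single j 1 ≠ 0 := by
  intro h
  have := DFunLike.congr_fun h i
  simp [Finsupp.single_apply, hij.symm] at this

variable (ha : ∀ k, 2 ≤ a k)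
include ha

lemma shift_eq_single (i k : Fin r) (m : Fin r →₀ ℕ) :
    (m + Finsupp.single i (a i) = Finsupp.single k (a k)) ↔ (k = i ∧ m = 0) := by
  constructor
  · intro h
    rcases eq_or_ne k i with rfl | hk
    · refine ⟨rfl, ?_⟩
      have := add_right_cancel (a := m) (b := Finsupp.single k (a k)) (c := 0) (by simpa using h)
      exact this
    · exfalso
      have := DFunLike.congr_fun h i
      have h2 := ha i
      simp only [Finsupp.add_apply, Finsupp.single_apply, hk, if_true, if_false] at this
      omega
  · rintro ⟨rfl, rfl⟩; simp

lemma shift_ne_small (i k : Fin r) (m : Fin r →₀ ℕ) (t : ℕ) (ht : t + 1 ≤ a k - 1) :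
    m + Finsupp.single i (a i) ≠ Finsupp.single k (t + 1) := by
  intro h
  have := DFunLike.congr_fun h i
  have h2 := ha i
  have h3 := ha k
  rcases eq_or_ne k i with rfl | hk
  · simp only [Finsupp.add_apply, Finsupp.single_apply, if_true] at this
    omega
  · simp only [Finsupp.add_apply, Finsupp.single_apply, hk, if_true, if_false] at this
    omega

lemma shift_ne_zero (i : Fin r) (m : Fin r →₀ ℕ) :
    m + Finsupp.single i (a i) ≠ 0 := by
  intro h
  have := DFunLike.congr_fun h i
  have h2 := ha i
  simp only [Finsupp.add_apply, Finsupp.single_apply, Finsupp.coe_zero, Pi.zero_apply,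
    if_true] at this
  omega

omit ha in
lemma ell_mul_gen1 (i j : Fin r) (hij : i ≠ j) (q : MvPolynomial (Fin r) ℂ) :
    ellMap r a (q * (X i * X j)) = 0 := by
  induction q using MvPolynomial.induction_on' with
  | add p q hp hq => rw [add_mul, map_add, hp, hq, add_zero]
  | monomial m c =>
    have hmul : (monomial m) c * (X i * X j)
        = monomial (m + Finsupp.single i 1 + Finsupp.single j 1) c := by
      rw [X, X, monomial_mul, monomial_mul]
      congr 1
      · rw [add_assoc]
      · ring
    rw [hmul]
    funext x
    rcases x with _ | x
    · simp only [ellMap, comp, LinearMap.pi_apply, lcoeff_apply, Pi.zero_apply]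
      rw [coeff_monomial, if_neg (twovar_ne_zero r i j hij m)]
    · rcases x with ⟨k, t⟩ | _
      · simp only [ellMap, comp, LinearMap.pi_apply, lcoeff_apply, Pi.zero_apply]
        rw [coeff_monomial, if_neg (twovar_ne_single r i j k hij m (t.val + 1))]
      · simp only [ellMap, comp, LinearMap.pi_apply, LinearMap.sum_apply,
          LinearMap.smul_apply, lcoeff_apply, Pi.zero_apply]
        refine Finset.sum_eq_zero fun k _ => ?_
        rw [coeff_monomial, if_neg (twovar_ne_single r i j k hij m (a k))]
        simp

lemma ell_mul_gen2 (i j : Fin r) (hij : i ≠ j) (q : MvPolynomial (Fin r) ℂ) :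
    ellMap r a (q * (C (a i : ℂ) * X i ^ (a i) - C (a j : ℂ) * X j ^ (a j))) = 0 := by
  induction q using MvPolynomial.induction_on' with
  | add p q hp hq => rw [add_mul, map_add, hp, hq, add_zero]
  | monomial m c =>
    have hmul : ∀ l : Fin r, (monomial m) c * (C (a l : ℂ) * X l ^ (a l))
        = monomial (m + Finsupp.single l (a l)) ((a l : ℂ) * c) := by
      intro l
      rw [X_pow_eq_monomial, C_mul_monomial, monomial_mul]
      congr 1
      ring
    rw [mul_sub, hmul, hmul, map_sub]
    funext x
    rcases x with _ | x
    · simp only [ellMap, comp, LinearMap.pi_apply, Pi.sub_apply, lcoeff_apply, Pi.zero_apply]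
      rw [coeff_monomial, coeff_monomial, if_neg (shift_ne_zero r a ha i m),
        if_neg (shift_ne_zero r a ha j m), sub_zero]
    · rcases x with ⟨k, t⟩ | _
      · have ht : t.val + 1 ≤ a k - 1 := t.isLt
        simp only [ellMap, comp, LinearMap.pi_apply, Pi.sub_apply, lcoeff_apply, Pi.zero_apply]
        rw [coeff_monomial, coeff_monomial,
          if_neg (shift_ne_small r a ha i k m t.val ht),
          if_neg (shift_ne_small r a ha j k m t.val ht), sub_zero]
      · simp only [ellMap, comp, LinearMap.pi_apply, Pi.sub_apply, LinearMap.sum_apply,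
          LinearMap.smul_apply, lcoeff_apply, Pi.zero_apply]
        have hsum : ∀ l : Fin r,
            ∑ k : Fin r, (a k : ℂ)⁻¹ • coeff (Finsupp.single k (a k))
              (monomial (m + Finsupp.single l (a l)) ((a l : ℂ) * c))
            = if m = 0 then c else 0 := by
          intro l
          rw [Finset.sum_eq_single_of_mem l (Finset.mem_univ l)]
          · rw [coeff_monomial]
            by_cases hm : m = 0
            · rw [if_pos ((shift_eq_single r a ha l l m).mpr ⟨rfl, hm⟩), if_pos hm,
                smul_eq_mul]
              have : (a l : ℂ) ≠ 0 := Nat.cast_ne_zero.mpr (by have := ha l; omega)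
              field_simp
            · rw [if_neg, if_neg hm, smul_zero]
              intro h
              exact hm ((shift_eq_single r a ha l l m).mp h).2
          · intro k _ hk
            rw [coeff_monomial, if_neg, smul_zero]
            intro h
            exact hk ((shift_eq_single r a ha l k m).mp h).1
        rw [hsum, hsum, sub_self]

lemma ell_vanish {p : MvPolynomial (Fin r) ℂ} (hp : p ∈ relIdeal r a) :
    ellMap r a p = 0 := by
  have key : ∀ p ∈ relIdeal r a, ∀ q, ellMap r a (q * p) = 0 := by
    intro p hp
    refine Submodule.span_induction ?_ ?_ ?_ ?_ hp
    · rintro x (⟨i, j, hij, rfl⟩ | ⟨i, j, hij, rfl⟩)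
      · exact fun q => ell_mul_gen1 r a i j hij q
      · exact fun q => ell_mul_gen2 r a ha i j hij q
    · intro q; rw [mul_zero, map_zero]
    · intro x y _ _ hx hy q
      rw [mul_add, map_add, hx, hy, add_zero]
    · intro c x _ hx q
      rw [smul_eq_mul, ← mul_assoc, hx]
  have := key p hp 1
  rwa [one_mul] at this

end BasisFamAux

namespace BasisFamAux2

open BasisFamAux

variable (r : ℕ) (hr : 2 ≤ r) (a : Fin r → ℕ)

noncomputable def famPoly : Idx r a → MvPolynomial (Fin r) ℂ
  | Sum.inl _ => 1
  | Sum.inr (Sum.inl ⟨i, j⟩) => X i ^ (j.val + 1)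
  | Sum.inr (Sum.inr _) =>
      C (a ⟨0, by omega⟩ : ℂ) * X (⟨0, by omega⟩ : Fin r) ^ (a ⟨0, by omega⟩)

lemma mk_smul (c : ℂ) (p : MvPolynomial (Fin r) ℂ) :
    Ideal.Quotient.mk (relIdeal r a) (c • p)
      = c • Ideal.Quotient.mk (relIdeal r a) p := by
  rw [← Ideal.Quotient.mkₐ_eq_mk ℂ, map_smul]

variable (ha : ∀ k, 2 ≤ a k)
include ha

lemma ell_fam (x : Idx r a) :
    ellMap r a (famPoly r hr a x) = Pi.single x 1 := by
  have hcast : ∀ l : Fin r, (a l : ℂ) ≠ 0 :=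
    fun l => Nat.cast_ne_zero.mpr (by have := ha l; omega)
  rcases x with u | x
  · cases u
    funext y
    rcases y with u | y
    · cases u
      simp [famPoly, ellMap, comp]
    · rcases y with ⟨k, t⟩ | u
      · rw [Pi.single_eq_of_ne (by simp)]
        simp only [famPoly, ellMap, comp, LinearMap.pi_apply, lcoeff_apply]
        rw [coeff_one, if_neg]
        intro h
        have := DFunLike.congr_fun h k
        simp at this
      · cases u
        rw [Pi.single_eq_of_ne (by simp)]
        simp only [famPoly, ellMap, comp, LinearMap.pi_apply, LinearMap.sum_apply,
          LinearMap.smul_apply, lcoeff_apply]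
        refine Finset.sum_eq_zero fun k _ => ?_
        rw [coeff_one, if_neg, smul_zero]
        intro h
        have := DFunLike.congr_fun h k
        have := ha k
        simp only [Finsupp.coe_zero, Pi.zero_apply, Finsupp.single_apply, if_true] at *
        omega
  · rcases x with ⟨i, j⟩ | u
    · funext y
      rcases y with u | y
      · cases u
        rw [Pi.single_eq_of_ne (by simp)]
        simp only [famPoly, ellMap, comp, LinearMap.pi_apply, lcoeff_apply,
          X_pow_eq_monomial]
        rw [coeff_monomial, if_neg]
        intro h
        have := DFunLike.congr_fun h i
        simp at this
      · rcases y with ⟨k, t⟩ | u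
        · simp only [famPoly, ellMap, comp, LinearMap.pi_apply, lcoeff_apply,
            X_pow_eq_monomial]
          rw [Pi.single_apply, coeff_monomial]
          by_cases h : Finsupp.single i (j.val + 1) = Finsupp.single k (t.val + 1)
          · rw [if_pos h, if_pos]
            rcases (Finsupp.single_eq_single_iff _ _ _ _).mp h with ⟨rfl, h2⟩ | ⟨h2, _⟩
            · have : j = t := Fin.ext (by omega)
              subst this
              rfl
            · omega
          · rw [if_neg h, if_neg]
            intro heq
            apply h
            simp only [Sum.inr.injEq, Sum.inl.injEq, Sigma.mk.inj_iff] at heq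
            obtain ⟨rfl, ht⟩ := heq
            rw [eq_of_heq ht]
        · cases u
          rw [Pi.single_eq_of_ne (by simp)]
          simp only [famPoly, ellMap, comp, LinearMap.pi_apply, LinearMap.sum_apply,
            LinearMap.smul_apply, lcoeff_apply, X_pow_eq_monomial]
          refine Finset.sum_eq_zero fun k _ => ?_
          rw [coeff_monomial, if_neg, smul_zero]
          intro h
          rcases (Finsupp.single_eq_single_iff _ _ _ _).mp h with ⟨rfl, h2⟩ | ⟨h2, _⟩
          · have h3 := j.isLt
            have := ha i
            omega
          · omega
    · cases u
      funext y
      rcases y with u | y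
      · cases u
        rw [Pi.single_eq_of_ne (by simp)]
        simp only [famPoly, ellMap, comp, LinearMap.pi_apply, lcoeff_apply,
          X_pow_eq_monomial, C_mul_monomial, mul_one]
        rw [coeff_monomial, if_neg]
        intro h
        have := DFunLike.congr_fun h (⟨0, by omega⟩ : Fin r)
        have := ha (⟨0, by omega⟩ : Fin r)
        simp only [Finsupp.coe_zero, Pi.zero_apply, Finsupp.single_apply, if_true] at *
        omega
      · rcases y with ⟨k, t⟩ | u
        · rw [Pi.single_eq_of_ne (by simp)]
          simp only [famPoly, ellMap, comp, LinearMap.pi_apply, lcoeff_apply,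
            X_pow_eq_monomial, C_mul_monomial, mul_one]
          rw [coeff_monomial, if_neg]
          intro h
          rcases (Finsupp.single_eq_single_iff _ _ _ _).mp h with ⟨rfl, h2⟩ | ⟨h2, _⟩
          · have h3 := t.isLt
            omega
          · have := ha (⟨0, by omega⟩ : Fin r)
            omega
        · cases u
          rw [Pi.single_eq_same]
          simp only [famPoly, ellMap, comp, LinearMap.pi_apply, LinearMap.sum_apply,
            LinearMap.smul_apply, lcoeff_apply, X_pow_eq_monomial, C_mul_monomial, mul_one]
          set i0 : Fin r := ⟨0, by omega⟩ with hi0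
          rw [Finset.sum_eq_single_of_mem i0 (Finset.mem_univ i0)]
          · rw [coeff_monomial, if_pos rfl, smul_eq_mul, inv_mul_cancel₀ (hcast i0)]
          · intro k _ hk
            rw [coeff_monomial, if_neg, smul_zero]
            intro h
            rcases (Finsupp.single_eq_single_iff _ _ _ _).mp h with ⟨h1, h2⟩ | ⟨h2, _⟩
            · exact hk h1.symm
            · have := ha i0
              omega

lemma fam_li : LinearIndependent ℂ (basisFam r hr a) := by
  rw [Fintype.linearIndependent_iff]
  intro g hg x
  have hmk : ∀ y, (Ideal.Quotient.mkₐ ℂ (relIdeal r a)) (famPoly r hr a y)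
      = basisFam r hr a y := by
    rintro (u | ⟨⟨i, j⟩ | u⟩) <;>
      simp [famPoly, basisFam, Ideal.Quotient.mkₐ_eq_mk]
  have h0 : (Ideal.Quotient.mkₐ ℂ (relIdeal r a)) (∑ y, g y • famPoly r hr a y) = 0 := by
    rw [map_sum]
    simp_rw [map_smul, hmk]
    exact hg
  have key : (∑ y, g y • famPoly r hr a y) ∈ relIdeal r a := by
    rwa [Ideal.Quotient.mkₐ_eq_mk, Ideal.Quotient.eq_zero_iff_mem] at h0
  have h2 := ell_vanish r a ha key
  rw [map_sum] at h2
  simp_rw [map_smul, ell_fam r hr a ha] at h2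
  have h3 := congrFun h2 x
  simp only [Finset.sum_apply, Pi.smul_apply, Pi.single_apply, smul_eq_mul, mul_ite,
    mul_one, mul_zero, Finset.sum_ite_eq, Finset.mem_univ, if_true, Pi.zero_apply] at h3
  exact h3

lemma two_var_mem (m : Fin r →₀ ℕ) (i j : Fin r) (hij : j ≠ i)
    (hi : i ∈ m.support) (hj : j ∈ m.support) :
    monomial m (1 : ℂ) ∈ relIdeal r a := by
  have hgen : (X i * X j : MvPolynomial (Fin r) ℂ) ∈ relIdeal r a :=
    Ideal.subset_span (Or.inl ⟨i, j, Ne.symm hij, rfl⟩)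
  have him : 1 ≤ m i := Nat.one_le_iff_ne_zero.mpr (Finsupp.mem_support_iff.mp hi)
  have hjm : 1 ≤ m j := Nat.one_le_iff_ne_zero.mpr (Finsupp.mem_support_iff.mp hj)
  have hexp : (m - Finsupp.single i 1 - Finsupp.single j 1)
      + (Finsupp.single i 1 + Finsupp.single j 1) = m := by
    ext l
    simp only [Finsupp.add_apply, Finsupp.tsub_apply, Finsupp.single_apply]
    by_cases h1 : i = l <;> by_cases h2 : j = l
    · exact absurd (h1.trans h2.symm).symm hij
    · have h3 : 1 ≤ m l := h1 ▸ him
      simp only [if_pos h1, if_neg h2]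
      omega
    · have h3 : 1 ≤ m l := h2 ▸ hjm
      simp only [if_neg h1, if_pos h2]
      omega
    · simp only [if_neg h1, if_neg h2]
      omega
  have hfac : monomial m (1 : ℂ)
      = monomial (m - Finsupp.single i 1 - Finsupp.single j 1) 1 * (X i * X j) := by
    rw [X, X, monomial_mul, monomial_mul, one_mul, one_mul, hexp]
  rw [hfac]
  exact Ideal.mul_mem_left _ _ hgen

lemma high_pow_mem (hr2 : 2 ≤ r) (i : Fin r) (n : ℕ) (hn : a i + 1 ≤ n) :
    (X i ^ n : MvPolynomial (Fin r) ℂ) ∈ relIdeal r a := by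
  have hr' : 2 ≤ r := hr2
  have hcast : (a i : ℂ) ≠ 0 := Nat.cast_ne_zero.mpr (by have := ha i; omega)
  have hj : ∃ j : Fin r, i ≠ j := by
    rcases eq_or_ne (i : ℕ) 0 with h | h
    · exact ⟨⟨1, by omega⟩, fun hc => by simp [Fin.ext_iff, h] at hc⟩
    · exact ⟨⟨0, by omega⟩, fun hc => by simp [Fin.ext_iff, h] at hc⟩
  obtain ⟨j, hij⟩ := hj
  obtain ⟨t, ht⟩ : ∃ t, a j = t + 1 := ⟨a j - 1, by have := ha j; omega⟩
  obtain ⟨m', rfl⟩ : ∃ m', n = a i + m' + 1 := ⟨n - a i - 1, by omega⟩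
  have h1 : (X i * X j : MvPolynomial (Fin r) ℂ) ∈ relIdeal r a :=
    Ideal.subset_span (Or.inl ⟨i, j, hij, rfl⟩)
  have h2 : (C (a i : ℂ) * X i ^ (a i) - C (a j : ℂ) * X j ^ (a j) :
      MvPolynomial (Fin r) ℂ) ∈ relIdeal r a :=
    Ideal.subset_span (Or.inr ⟨i, j, hij, rfl⟩)
  have key : C (a i : ℂ) * X i ^ (a i + m' + 1)
      = X i ^ (m' + 1) * (C (a i : ℂ) * X i ^ (a i) - C (a j : ℂ) * X j ^ (a j))
        + (C (a j : ℂ) * X j ^ t * X i ^ m') * (X i * X j) := by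
    rw [ht]; ring
  have hmem : C (a i : ℂ) * X i ^ (a i + m' + 1) ∈ relIdeal r a := by
    rw [key]
    exact add_mem (Ideal.mul_mem_left _ _ h2) (Ideal.mul_mem_left _ _ h1)
  have := Ideal.mul_mem_left _ (C ((a i : ℂ))⁻¹) hmem
  rwa [← mul_assoc, ← C_mul, inv_mul_cancel₀ hcast, C_1, one_mul] at this

lemma inv_smul_top (i : Fin r) :
    (a i : ℂ)⁻¹ • Ideal.Quotient.mk (relIdeal r a) (C (a i : ℂ) * X i ^ (a i))
      = Ideal.Quotient.mk (relIdeal r a) (X i ^ (a i)) := by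
  have hcast : (a i : ℂ) ≠ 0 := Nat.cast_ne_zero.mpr (by have := ha i; omega)
  rw [← mk_smul, MvPolynomial.smul_eq_C_mul, ← mul_assoc, ← C_mul,
    inv_mul_cancel₀ hcast, C_1, one_mul]

lemma pow_ai_mem_span (i : Fin r) :
    Ideal.Quotient.mk (relIdeal r a) (X i ^ (a i))
      ∈ Submodule.span ℂ (Set.range (basisFam r hr a)) := by
  set i0 : Fin r := ⟨0, by omega⟩ with hi0
  have htop : basisFam r hr a (Sum.inr (Sum.inr ()))
      = Ideal.Quotient.mk (relIdeal r a) (C (a i0 : ℂ) * X i0 ^ (a i0)) := rfl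
  rcases eq_or_ne i i0 with rfl | hne
  · rw [← inv_smul_top r a ha i0, ← htop]
    exact Submodule.smul_mem _ _ (Submodule.subset_span ⟨Sum.inr (Sum.inr ()), rfl⟩)
  · have hgen : (C (a i : ℂ) * X i ^ (a i) - C (a i0 : ℂ) * X i0 ^ (a i0) :
        MvPolynomial (Fin r) ℂ) ∈ relIdeal r a :=
      Ideal.subset_span (Or.inr ⟨i, i0, hne, rfl⟩)
    have heq : Ideal.Quotient.mk (relIdeal r a) (C (a i : ℂ) * X i ^ (a i))
        = Ideal.Quotient.mk (relIdeal r a) (C (a i0 : ℂ) * X i0 ^ (a i0)) :=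
      Ideal.Quotient.eq.mpr hgen
    rw [← inv_smul_top r a ha i, heq, ← htop]
    exact Submodule.smul_mem _ _ (Submodule.subset_span ⟨Sum.inr (Sum.inr ()), rfl⟩)

lemma fam_span : ⊤ ≤ Submodule.span ℂ (Set.range (basisFam r hr a)) := by
  intro z _
  obtain ⟨p, rfl⟩ := Ideal.Quotient.mk_surjective z
  induction p using MvPolynomial.induction_on' with
  | add p q hp hq => rw [map_add]; exact Submodule.add_mem _ (hp Submodule.mem_top) (hq Submodule.mem_top)
  | monomial m c =>
    have hc : (monomial m) c = c • (monomial m) (1 : ℂ) := by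
      rw [smul_monomial, smul_eq_mul, mul_one]
    rw [hc, mk_smul]
    refine Submodule.smul_mem _ c ?_
    rcases eq_or_ne m 0 with rfl | hm
    · have : (monomial (0 : Fin r →₀ ℕ)) (1 : ℂ) = 1 := by simp
      rw [this, map_one]
      exact Submodule.subset_span ⟨Sum.inl (), rfl⟩
    · obtain ⟨i, hi⟩ := Finsupp.support_nonempty_iff.mpr hm
      by_cases h2 : ∃ j ∈ m.support, j ≠ i
      · obtain ⟨j, hj, hji⟩ := h2
        rw [Ideal.Quotient.eq_zero_iff_mem.mpr (two_var_mem r a ha m i j hji hi hj)]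
        exact Submodule.zero_mem _
      · push_neg at h2
        have hm_single : m = Finsupp.single i (m i) := by
          ext l
          rcases eq_or_ne l i with rfl | hl
          · simp [Finsupp.single_apply]
          · have hls : l ∉ m.support := fun hls => hl (h2 l hls)
            rw [Finsupp.notMem_support_iff.mp hls, Finsupp.single_apply,
              if_neg (Ne.symm hl)]
        have hn1 : 1 ≤ m i := Nat.one_le_iff_ne_zero.mpr (Finsupp.mem_support_iff.mp hi)
        rw [hm_single, ← X_pow_eq_monomial]
        by_cases hcase : m i ≤ a i - 1
        · refine Submodule.subset_span ⟨Sum.inr (Sum.inl ⟨i, ⟨m i - 1, by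
            have := ha i; omega⟩⟩), ?_⟩
          show Ideal.Quotient.mk (relIdeal r a) (X i ^ (m i - 1 + 1)) = _
          congr 2
          omega
        · by_cases hcase2 : m i = a i
          · rw [hcase2]
            exact pow_ai_mem_span r hr a ha i
          · have hge : a i + 1 ≤ m i := by have := ha i; omega
            rw [Ideal.Quotient.eq_zero_iff_mem.mpr (high_pow_mem r a ha hr i (m i) hge)]
            exact Submodule.zero_mem _

end BasisFamAux2

theorem basisFam_is_basis (r : ℕ) (hr : 2 ≤ r) (a : Fin r → ℕ) (ha : ∀ k, 2 ≤ a k) :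
    ∃ B : Module.Basis (Unit ⊕ ((Σ i : Fin r, Fin (a i - 1)) ⊕ Unit)) ℂ
      (MvPolynomial (Fin r) ℂ ⧸ relIdeal r a), ⇑B = basisFam r hr a := by
  exact ⟨Module.Basis.mk (BasisFamAux2.fam_li r hr a ha) (BasisFamAux2.fam_span r hr a ha),
    Module.Basis.coe_mk _ _⟩
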